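/- Let M ≥ 2 be an integer, let (X,Y) be a pair of random elements of 𝒳 × 𝒴, let X̄ be independent of (X,Y) with the same law as X, let q : 𝒳 × 𝒴 → (0,∞) be measurable, and let α > 0. Assume 0 < E[q(X̄,y)^α] < ∞ for every y, define i_α(x,y) = log( q(x,y)^α / E[q(X̄,y)^α] ) and g(x,y) = P[q(X̄, y) ≥ q(x, y)]. Then E[ min{1, (M−1)·g(X,Y)} ] ≤ E[ exp( −[ i_α(X,Y) − log(M−1) ]⁺ ) ], where [a]⁺ = max{0, a}. -/

import Mathlib

open MeasureTheory ProbabilityTheory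
open scoped ENNReal

/-- **Relaxation step from the RCU bound to the RCUs bound with parameter `α`.**
`(X, Y)` is the transmitted codeword and channel output, `X̄` is an independent copy of `X`
(encoded through its law `Measure.map X P`), `q` is a positive measurable decoding metric,
and `α > 0`.  Assuming `0 < E[q(X̄,y)^α] < ∞` for every `y` (encoded by integrability and
positivity of the integral), with
`i_α(x,y) = log(q(x,y)^α / E[q(X̄,y)^α])` and `g(x,y) = P[q(X̄,y) ≥ q(x,y)]`, we have
`E[min{1, (M−1)·g(X,Y)}] ≤ E[exp(−[i_α(X,Y) − log(M−1)]⁺)]`. -/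
theorem rcus_relaxation
    {Ω 𝒳 𝒴 : Type*} [MeasurableSpace Ω] [MeasurableSpace 𝒳] [MeasurableSpace 𝒴]
    (P : Measure Ω) [IsProbabilityMeasure P]
    (M : ℕ) (hM : 2 ≤ M)
    (X : Ω → 𝒳) (Y : Ω → 𝒴) (hX : Measurable X) (hY : Measurable Y)
    (q : 𝒳 × 𝒴 → ℝ) (hq : Measurable q) (hqpos : ∀ p, 0 < q p)
    (α : ℝ) (hα : 0 < α)
    (hint : ∀ y, Integrable (fun x' => q (x', y) ^ α) (Measure.map X P))
    (hpos : ∀ y, 0 < ∫ x', q (x', y) ^ α ∂(Measure.map X P))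
    (g : 𝒳 → 𝒴 → ℝ≥0∞)
    (hg : ∀ x y, g x y = (Measure.map X P) {x' | q (x, y) ≤ q (x', y)})
    (iα : 𝒳 → 𝒴 → ℝ)
    (hiα : ∀ x y,
      iα x y = Real.log (q (x, y) ^ α / ∫ x', q (x', y) ^ α ∂(Measure.map X P))) :
    ∫⁻ ω, min 1 ((M - 1 : ℕ) * g (X ω) (Y ω)) ∂P ≤
      ∫⁻ ω, ENNReal.ofReal
        (Real.exp (-(max 0 (iα (X ω) (Y ω) - Real.log ((M : ℝ) - 1))))) ∂P := by
  apply lintegral_mono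
  intro ω
  dsimp only
  set x := X ω
  set y := Y ω
  set μ := Measure.map X P with hμ
  haveI : IsProbabilityMeasure μ := Measure.isProbabilityMeasure_map hX.aemeasurable
  set A := q (x, y) ^ α with hA
  set B := ∫ x', q (x', y) ^ α ∂μ with hB
  have hApos : 0 < A := Real.rpow_pos_of_pos (hqpos _) α
  have hBpos : 0 < B := hpos y
  have hM1 : (1 : ℝ) ≤ (M : ℝ) - 1 := by
    have : (2 : ℝ) ≤ (M : ℝ) := by exact_mod_cast hM
    linarith
  have hM1pos : (0 : ℝ) < (M : ℝ) - 1 := lt_of_lt_of_le one_pos hM1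
  -- Markov bound on g
  have hset : {x' | q (x, y) ≤ q (x', y)} = {x' | A ≤ q (x', y) ^ α} := by
    ext x'
    simp only [Set.mem_setOf_eq, hA]
    exact (Real.rpow_le_rpow_iff (hqpos _).le (hqpos _).le hα).symm
  have hmarkov : g x y ≤ ENNReal.ofReal (B / A) := by
    rw [hg, hset]
    have h := mul_meas_ge_le_integral_of_nonneg
      (f := fun x' => q (x', y) ^ α)
      (Filter.Eventually.of_forall fun x' => (Real.rpow_pos_of_pos (hqpos _) α).le)
      (hint y) A
    have hfin : μ {x' | A ≤ q (x', y) ^ α} ≠ ⊤ := measure_ne_top μ _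
    have htr : (μ {x' | A ≤ q (x', y) ^ α}).toReal ≤ B / A := by
      rw [le_div_iff₀ hApos]
      rw [measureReal_def] at h
      linarith [h]
    calc μ {x' | A ≤ q (x', y) ^ α}
        = ENNReal.ofReal ((μ {x' | A ≤ q (x', y) ^ α}).toReal) := (ENNReal.ofReal_toReal hfin).symm
      _ ≤ ENNReal.ofReal (B / A) := ENNReal.ofReal_le_ofReal htr
  -- rewrite RHS
  have hexp : Real.exp (-(max 0 (iα x y - Real.log ((M : ℝ) - 1))))
      = min 1 (((M : ℝ) - 1) * (B / A)) := by
    rw [hiα]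
    have h1 : Real.exp (-(max 0 (Real.log (A / B) - Real.log ((M : ℝ) - 1))))
        = min (Real.exp 0) (Real.exp (-(Real.log (A / B) - Real.log ((M : ℝ) - 1)))) := by
      rw [← Real.exp_monotone.map_min, ← min_neg_neg, neg_zero]
    rw [h1, Real.exp_zero]
    congr 1
    rw [neg_sub, Real.exp_sub, Real.exp_log hM1pos, Real.exp_log (div_pos hApos hBpos)]
    field_simp
  rw [hexp]
  -- combine
  have hle : min 1 ((M - 1 : ℕ) * g x y)
      ≤ min 1 ((M - 1 : ℕ) * ENNReal.ofReal (B / A)) :=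
    min_le_min le_rfl (mul_le_mul_right hmarkov _)
  refine hle.trans (le_of_eq ?_)
  have hcast : ((M - 1 : ℕ) : ℝ≥0∞) = ENNReal.ofReal ((M : ℝ) - 1) := by
    rw [← ENNReal.ofReal_natCast]
    congr 1
    push_cast [Nat.cast_sub (le_trans one_le_two hM)]
    ring
  have hmono : Monotone ENNReal.ofReal := fun _ _ h => ENNReal.ofReal_le_ofReal h
  rw [hcast, ← ENNReal.ofReal_mul hM1pos.le, ← ENNReal.ofReal_one, ← hmono.map_min]
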